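/- For an Erdős–Rényi random graph on n vertices with edge probability p, the third matrix moment of the Laplacian satisfies 𝔼[L³] = ((n-2)(n-4)p³ + 6(n-2)p² + 4p)(nI - J). -/

import Mathlib

open Matrix MeasureTheory ProbabilityTheory Finset

set_option linter.unusedSectionVars false
section ER

variable {n : ℕ} {p : ℝ} {Ω : Type*} [MeasureSpace Ω] [IsProbabilityMeasure (ℙ : Measure Ω)]
variable {A : Ω → Matrix (Fin n) (Fin n) ℝ}

/-- canonical (sorted) edge -/
def edg (a b : Fin n) (h : a ≠ b) : {e : Fin n × Fin n // e.1 < e.2} :=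
  if hlt : a < b then ⟨(a, b), hlt⟩ else ⟨(b, a), lt_of_le_of_ne (not_lt.mp hlt) h.symm⟩

lemma edg_eq_iff {a b c d : Fin n} (h1 : a ≠ b) (h2 : c ≠ d) :
    edg a b h1 = edg c d h2 ↔ (a = c ∧ b = d) ∨ (a = d ∧ b = c) := by
  unfold edg
  split_ifs with hab hcd hcd <;>
    simp only [Subtype.mk.injEq, Prod.mk.injEq] <;>
    constructor <;> rintro (⟨rfl, rfl⟩ | ⟨rfl, rfl⟩) <;> simp_all <;> omega

lemma edg_fst_ne_snd {a b : Fin n} (h : a ≠ b) : (edg a b h).1.1 ≠ (edg a b h).1.2 :=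
  ne_of_lt (edg a b h).2

lemma A_edg (hsymm : ∀ ω i j, A ω i j = A ω j i) (ω : Ω) {a b : Fin n} (h : a ≠ b) :
    A ω (edg a b h).1.1 (edg a b h).1.2 = A ω a b := by
  unfold edg; split_ifs with hlt
  · rfl
  · exact hsymm ω b a

lemma abs_A_le_one (h01 : ∀ ω i j, A ω i j = 0 ∨ A ω i j = 1) (ω : Ω) (a b : Fin n) :
    |A ω a b| ≤ 1 := by rcases h01 ω a b with h | h <;> rw [h] <;> norm_num

lemma integ_prodS (hmeas : ∀ i j, Measurable fun ω => A ω i j)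
    (h01 : ∀ ω i j, A ω i j = 0 ∨ A ω i j = 1)
    (S : Finset {e : Fin n × Fin n // e.1 < e.2}) :
    Integrable (fun ω => ∏ e ∈ S, A ω e.1.1 e.1.2) ℙ := by
  refine (integrable_const (1 : ℝ)).mono' ?_ (ae_of_all _ fun ω => ?_)
  · exact (Finset.measurable_prod S fun e _ => hmeas e.1.1 e.1.2).aestronglyMeasurable
  · rw [Real.norm_eq_abs, Finset.abs_prod]
    exact Finset.prod_le_one (fun e _ => abs_nonneg _)
      (fun e _ => abs_A_le_one h01 ω e.1.1 e.1.2)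

lemma integ3 (hmeas : ∀ i j, Measurable fun ω => A ω i j)
    (h01 : ∀ ω i j, A ω i j = 0 ∨ A ω i j = 1) (a b c d e f : Fin n) :
    Integrable (fun ω => A ω a b * (A ω c d * A ω e f)) ℙ := by
  refine (integrable_const (1 : ℝ)).mono' ?_ (ae_of_all _ fun ω => ?_)
  · exact ((hmeas a b).mul ((hmeas c d).mul (hmeas e f))).aestronglyMeasurable
  · rw [Real.norm_eq_abs, abs_mul, abs_mul]
    have h1 := abs_A_le_one h01 ω a b
    have h2 := abs_A_le_one h01 ω c d
    have h3 := abs_A_le_one h01 ω e f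
    have n1 := abs_nonneg (A ω a b)
    have n2 := abs_nonneg (A ω c d)
    have n3 := abs_nonneg (A ω e f)
    exact le_trans (mul_le_mul h1 (mul_le_mul h2 h3 n3 zero_le_one) (by positivity) zero_le_one) (by norm_num)

lemma int_X (hp : p ∈ Set.Ioo (0:ℝ) 1) (hmeas : ∀ i j, Measurable fun ω => A ω i j)
    (h01 : ∀ ω i j, A ω i j = 0 ∨ A ω i j = 1)
    (hbern : ∀ i j, i ≠ j → (ℙ : Measure Ω) {ω | A ω i j = 1} = ENNReal.ofReal p)
    {a b : Fin n} (hab : a ≠ b) : ∫ ω, A ω a b = p := by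
  have hs : MeasurableSet {ω | A ω a b = 1} := hmeas a b (measurableSet_singleton 1)
  have hfun : (fun ω => A ω a b) = Set.indicator {ω | A ω a b = 1} (fun _ => (1:ℝ)) := by
    funext ω
    rcases h01 ω a b with h | h <;> simp [Set.indicator_apply, h]
  rw [hfun, integral_indicator_const _ hs, measureReal_def, hbern a b hab, smul_eq_mul, mul_one,
    ENNReal.toReal_ofReal hp.1.le]


lemma int_prodS (hp : p ∈ Set.Ioo (0:ℝ) 1) (hmeas : ∀ i j, Measurable fun ω => A ω i j)
    (h01 : ∀ ω i j, A ω i j = 0 ∨ A ω i j = 1)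
    (hbern : ∀ i j, i ≠ j → (ℙ : Measure Ω) {ω | A ω i j = 1} = ENNReal.ofReal p)
    (hindep : iIndepFun
      (fun (e : {e : Fin n × Fin n // e.1 < e.2}) ω => A ω e.1.1 e.1.2) ℙ)
    (S : Finset {e : Fin n × Fin n // e.1 < e.2}) :
    ∫ ω, ∏ e ∈ S, A ω e.1.1 e.1.2 = p ^ S.card := by
  classical
  induction S using Finset.induction_on with
  | empty => simp
  | @insert e S he ih =>
    have hind : IndepFun (∏ f ∈ S, fun ω => A ω f.1.1 f.1.2)
        (fun ω => A ω e.1.1 e.1.2) ℙ :=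
      hindep.indepFun_finset_prod_of_notMem (fun f => hmeas f.1.1 f.1.2) he
    have hprodeq : (∏ f ∈ S, fun ω => A ω f.1.1 f.1.2) = fun ω => ∏ f ∈ S, A ω f.1.1 f.1.2 := by
      funext ω; simp [Finset.prod_apply]
    rw [hprodeq] at hind
    have key := hind.integral_mul_eq_mul_integral (integ_prodS hmeas h01 S).aestronglyMeasurable
      ((integrable_const (1:ℝ)).mono' (hmeas e.1.1 e.1.2).aestronglyMeasurable
        (ae_of_all _ fun ω => by
          rw [Real.norm_eq_abs]; exact abs_A_le_one h01 ω e.1.1 e.1.2)).aestronglyMeasurable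
    have : (fun ω => ∏ f ∈ insert e S, A ω f.1.1 f.1.2)
        = fun ω => (∏ f ∈ S, A ω f.1.1 f.1.2) * A ω e.1.1 e.1.2 := by
      funext ω; rw [Finset.prod_insert he, mul_comm]
    rw [this]
    rw [show (fun ω => (∏ f ∈ S, A ω f.1.1 f.1.2) * A ω e.1.1 e.1.2)
        = ((fun ω => ∏ f ∈ S, A ω f.1.1 f.1.2) * fun ω => A ω e.1.1 e.1.2) from rfl,
      key, ih, int_X hp hmeas h01 hbern (ne_of_lt e.2),
      Finset.card_insert_of_notMem he, pow_succ]

lemma prod3 {α : Type*} [DecidableEq α] (v : α → ℝ) (hv : ∀ e, v e = 0 ∨ v e = 1)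
    (e1 e2 e3 : α) : v e1 * (v e2 * v e3) = ∏ e ∈ ({e1, e2, e3} : Finset α), v e := by
  rcases hv e1 with h1 | h1
  · rw [h1, Finset.prod_eq_zero (by simp : e1 ∈ ({e1,e2,e3} : Finset α)) h1]; ring
  · rcases hv e2 with h2 | h2
    · rw [h2, Finset.prod_eq_zero (by simp : e2 ∈ ({e1,e2,e3} : Finset α)) h2]; ring
    · rcases hv e3 with h3 | h3
      · rw [h3, Finset.prod_eq_zero (by simp : e3 ∈ ({e1,e2,e3} : Finset α)) h3]; ring
      · rw [h1, h2, h3, Finset.prod_eq_one]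
        · ring
        · intro x hx
          simp only [Finset.mem_insert, Finset.mem_singleton] at hx
          rcases hx with rfl | rfl | rfl <;> assumption

lemma int_triple (hp : p ∈ Set.Ioo (0:ℝ) 1) (hmeas : ∀ i j, Measurable fun ω => A ω i j)
    (hsymm : ∀ ω i j, A ω i j = A ω j i)
    (h01 : ∀ ω i j, A ω i j = 0 ∨ A ω i j = 1)
    (hbern : ∀ i j, i ≠ j → (ℙ : Measure Ω) {ω | A ω i j = 1} = ENNReal.ofReal p)
    (hindep : iIndepFun
      (fun (e : {e : Fin n × Fin n // e.1 < e.2}) ω => A ω e.1.1 e.1.2) ℙ)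
    {a b c d e f : Fin n} (hab : a ≠ b) (hcd : c ≠ d) (hef : e ≠ f) :
    ∫ ω, A ω a b * (A ω c d * A ω e f)
      = p ^ ({edg a b hab, edg c d hcd, edg e f hef} :
          Finset {e : Fin n × Fin n // e.1 < e.2}).card := by
  have hpt : (fun ω => A ω a b * (A ω c d * A ω e f))
      = fun ω => ∏ e' ∈ ({edg a b hab, edg c d hcd, edg e f hef} :
          Finset {e : Fin n × Fin n // e.1 < e.2}), A ω e'.1.1 e'.1.2 := by
    funext ω
    have h := prod3 (fun e' : {e : Fin n × Fin n // e.1 < e.2} => A ω e'.1.1 e'.1.2)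
      (fun e' => h01 ω e'.1.1 e'.1.2) (edg a b hab) (edg c d hcd) (edg e f hef)
    simp only [A_edg hsymm ω hab, A_edg hsymm ω hcd, A_edg hsymm ω hef] at h
    exact h
  rw [hpt, int_prodS hp hmeas h01 hbern hindep]


lemma edg_symm {a b : Fin n} (h : a ≠ b) : edg a b h = edg b a h.symm :=
  (edg_eq_iff h h.symm).mpr (Or.inr ⟨rfl, rfl⟩)

lemma edg_ne {a b c d : Fin n} (h1 : a ≠ b) (h2 : c ≠ d) (h : ¬(a = c ∧ b = d))
    (h' : ¬(a = d ∧ b = c)) : edg a b h1 ≠ edg c d h2 := by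
  rw [Ne, edg_eq_iff]; tauto

lemma card3_3 {α : Type*} [DecidableEq α] {x y z : α} (hxy : x ≠ y) (hxz : x ≠ z)
    (hyz : y ≠ z) : ({x, y, z} : Finset α).card = 3 := by
  rw [Finset.card_insert_of_notMem (by simp [hxy, hxz]), Finset.card_pair hyz]

lemma card3_zy {α : Type*} [DecidableEq α] {x y z : α} (hz : z = y) (hxy : x ≠ y) :
    ({x, y, z} : Finset α).card = 2 := by
  rw [hz, show ({x, y, y} : Finset α) = ({x, y} : Finset α) by simp]
  exact Finset.card_pair hxy

lemma card3_zx {α : Type*} [DecidableEq α] {x y z : α} (hz : z = x) (hxy : x ≠ y) :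
    ({x, y, z} : Finset α).card = 2 := by
  rw [hz, show ({x, y, x} : Finset α) = ({x, y} : Finset α) by rw [Finset.pair_comm x y]; simp]
  exact Finset.card_pair hxy

lemma card3_yx {α : Type*} [DecidableEq α] {x y z : α} (hy : y = x) (hxz : x ≠ z) :
    ({x, y, z} : Finset α).card = 2 := by
  rw [hy, show ({x, x, z} : Finset α) = ({x, z} : Finset α) by simp]
  exact Finset.card_pair hxz

lemma card3_1 {α : Type*} [DecidableEq α] {x y z : α} (hy : y = x) (hz : z = x) :
    ({x, y, z} : Finset α).card = 1 := by rw [hy, hz]; simp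

lemma two_le_n {u v : Fin n} (huv : u ≠ v) : 2 ≤ n := by
  have h1 := u.2
  have h2 := v.2
  have : u.val ≠ v.val := fun h => huv (Fin.ext h)
  omega


lemma three_le_n {u v w : Fin n} (huv : u ≠ v) (hwu : w ≠ u) (hwv : w ≠ v) : 3 ≤ n := by
  have h1 := u.2; have h2 := v.2; have h3 := w.2
  have e1 : u.val ≠ v.val := fun h => huv (Fin.ext h)
  have e2 : w.val ≠ u.val := fun h => hwu (Fin.ext h)
  have e3 : w.val ≠ v.val := fun h => hwv (Fin.ext h)
  omega


section Ev

variable (hp : p ∈ Set.Ioo (0:ℝ) 1)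
  (hmeas : ∀ i j, Measurable fun ω => A ω i j)
  (hsymm : ∀ ω i j, A ω i j = A ω j i)
  (hdiag : ∀ ω i, A ω i i = 0)
  (h01 : ∀ ω i j, A ω i j = 0 ∨ A ω i j = 1)
  (hbern : ∀ i j, i ≠ j → (ℙ : Measure Ω) {ω | A ω i j = 1} = ENNReal.ofReal p)
  (hindep : iIndepFun
    (fun (e : {e : Fin n × Fin n // e.1 < e.2}) ω => A ω e.1.1 e.1.2) ℙ)

lemma cast_sub_one (h : 1 ≤ n) : ((n - 1 : ℕ) : ℝ) = (n : ℝ) - 1 := by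
  push_cast [Nat.cast_sub h]; ring

lemma cast_sub_two (h : 2 ≤ n) : ((n - 2 : ℕ) : ℝ) = (n : ℝ) - 2 := by
  push_cast [Nat.cast_sub h]; ring

lemma cast_sub_three (h : 3 ≤ n) : ((n - 3 : ℕ) : ℝ) = (n : ℝ) - 3 := by
  push_cast [Nat.cast_sub h]; ring

lemma card_erase1 (u : Fin n) : (Finset.univ.erase u).card = n - 1 := by
  rw [Finset.card_erase_of_mem (Finset.mem_univ u), Finset.card_univ, Fintype.card_fin]

lemma card_erase2 {u v : Fin n} (huv : v ≠ u) :
    ((Finset.univ.erase u).erase v).card = n - 2 := by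
  rw [Finset.card_erase_of_mem (Finset.mem_erase.mpr ⟨huv, Finset.mem_univ v⟩), card_erase1]
  omega

lemma card_erase3 {u v w : Fin n} (hvu : v ≠ u) (hwv : w ≠ v) (hwu : w ≠ u) :
    (((Finset.univ.erase u).erase v).erase w).card = n - 3 := by
  rw [Finset.card_erase_of_mem
    (Finset.mem_erase.mpr ⟨hwv, Finset.mem_erase.mpr ⟨hwu, Finset.mem_univ w⟩⟩), card_erase2 hvu]
  omega

include hp hmeas hsymm hdiag h01 hbern hindep

lemma Ev5d (u : Fin n) :
    ∑ a : Fin n, ∑ l : Fin n, ∫ ω, A ω u a * (A ω u l * A ω l u)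
      = ((n:ℝ) - 1) * (p + ((n:ℝ) - 2) * p ^ 2) := by
  have hn1 : 1 ≤ n := u.pos
  calc ∑ a : Fin n, ∑ l : Fin n, ∫ ω, A ω u a * (A ω u l * A ω l u)
      = ∑ a ∈ Finset.univ.erase u, ∑ l : Fin n, ∫ ω, A ω u a * (A ω u l * A ω l u) :=
        (Finset.sum_erase _ (by simp [hdiag])).symm
    _ = ∑ a ∈ Finset.univ.erase u, (p + ((n:ℝ) - 2) * p ^ 2) := by
        refine Finset.sum_congr rfl fun a ha => ?_
        have hau : a ≠ u := Finset.ne_of_mem_erase ha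
        have hua : u ≠ a := hau.symm
        have hn2 : 2 ≤ n := two_le_n hau
        calc ∑ l : Fin n, ∫ ω, A ω u a * (A ω u l * A ω l u)
            = ∑ l ∈ Finset.univ.erase u, ∫ ω, A ω u a * (A ω u l * A ω l u) :=
              (Finset.sum_erase _ (by simp [hdiag])).symm
          _ = (∫ ω, A ω u a * (A ω u a * A ω a u))
              + ∑ l ∈ (Finset.univ.erase u).erase a, ∫ ω, A ω u a * (A ω u l * A ω l u) :=
              (Finset.add_sum_erase _ _ (Finset.mem_erase.mpr ⟨hau, Finset.mem_univ a⟩)).symm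
          _ = p + ((n:ℝ) - 2) * p ^ 2 := by
              rw [int_triple hp hmeas hsymm h01 hbern hindep hua hua hau,
                card3_1 rfl (edg_symm hau), pow_one]
              congr 1
              calc ∑ l ∈ (Finset.univ.erase u).erase a, ∫ ω, A ω u a * (A ω u l * A ω l u)
                  = ∑ _l ∈ (Finset.univ.erase u).erase a, p ^ 2 := by
                    refine Finset.sum_congr rfl fun l hl => ?_
                    have hla : l ≠ a := (Finset.mem_erase.mp hl).1
                    have hlu : l ≠ u := Finset.ne_of_mem_erase (Finset.mem_of_mem_erase hl)
                    rw [int_triple hp hmeas hsymm h01 hbern hindep hua hlu.symm hlu,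
                      card3_zy (edg_symm hlu)
                        (edg_ne hua hlu.symm (fun h => hla h.2.symm) (fun h => hlu h.1.symm))]
                _ = ((n:ℝ) - 2) * p ^ 2 := by
                    rw [Finset.sum_const, card_erase2 hau, nsmul_eq_mul, cast_sub_two hn2]
    _ = ((n:ℝ) - 1) * (p + ((n:ℝ) - 2) * p ^ 2) := by
        rw [Finset.sum_const, card_erase1, nsmul_eq_mul, cast_sub_one hn1]


lemma Ev2 {u v : Fin n} (huv : u ≠ v) :
    ∑ a : Fin n, ∑ b : Fin n, ∫ ω, A ω u a * (A ω u b * A ω u v)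
      = p + 3 * ((n:ℝ) - 2) * p ^ 2 + ((n:ℝ) - 2) * ((n:ℝ) - 3) * p ^ 3 := by
  have hn2 : 2 ≤ n := two_le_n huv
  have hvu : v ≠ u := huv.symm
  calc ∑ a : Fin n, ∑ b : Fin n, ∫ ω, A ω u a * (A ω u b * A ω u v)
      = ∑ a ∈ Finset.univ.erase u, ∑ b : Fin n, ∫ ω, A ω u a * (A ω u b * A ω u v) :=
        (Finset.sum_erase _ (by simp [hdiag])).symm
    _ = (∑ b : Fin n, ∫ ω, A ω u v * (A ω u b * A ω u v))
        + ∑ a ∈ (Finset.univ.erase u).erase v,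
            ∑ b : Fin n, ∫ ω, A ω u a * (A ω u b * A ω u v) :=
        (Finset.add_sum_erase _ _ (Finset.mem_erase.mpr ⟨hvu, Finset.mem_univ v⟩)).symm
    _ = p + 3 * ((n:ℝ) - 2) * p ^ 2 + ((n:ℝ) - 2) * ((n:ℝ) - 3) * p ^ 3 := by
        have hA : ∑ b : Fin n, ∫ ω, A ω u v * (A ω u b * A ω u v) = p + ((n:ℝ) - 2) * p ^ 2 := by
          calc ∑ b : Fin n, ∫ ω, A ω u v * (A ω u b * A ω u v)
              = ∑ b ∈ Finset.univ.erase u, ∫ ω, A ω u v * (A ω u b * A ω u v) :=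
                (Finset.sum_erase _ (by simp [hdiag])).symm
            _ = (∫ ω, A ω u v * (A ω u v * A ω u v))
                + ∑ b ∈ (Finset.univ.erase u).erase v, ∫ ω, A ω u v * (A ω u b * A ω u v) :=
                (Finset.add_sum_erase _ _ (Finset.mem_erase.mpr ⟨hvu, Finset.mem_univ v⟩)).symm
            _ = p + ((n:ℝ) - 2) * p ^ 2 := by
                rw [int_triple hp hmeas hsymm h01 hbern hindep huv huv huv, card3_1 rfl rfl, pow_one]
                congr 1
                calc ∑ b ∈ (Finset.univ.erase u).erase v, ∫ ω, A ω u v * (A ω u b * A ω u v)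
                    = ∑ _b ∈ (Finset.univ.erase u).erase v, p ^ 2 := by
                      refine Finset.sum_congr rfl fun b hb => ?_
                      have hbv : b ≠ v := (Finset.mem_erase.mp hb).1
                      have hbu : b ≠ u := Finset.ne_of_mem_erase (Finset.mem_of_mem_erase hb)
                      rw [int_triple hp hmeas hsymm h01 hbern hindep huv hbu.symm huv,
                        card3_zx rfl (edg_ne huv hbu.symm (fun h => hbv h.2.symm)
                          (fun h => hbu h.1.symm))]
                  _ = ((n:ℝ) - 2) * p ^ 2 := by
                      rw [Finset.sum_const, card_erase2 hvu, nsmul_eq_mul, cast_sub_two hn2]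
        have hB : ∀ a ∈ (Finset.univ.erase u).erase v,
            (∑ b : Fin n, ∫ ω, A ω u a * (A ω u b * A ω u v))
              = 2 * p ^ 2 + ((n:ℝ) - 3) * p ^ 3 := by
          intro a ha
          have hav : a ≠ v := (Finset.mem_erase.mp ha).1
          have hau : a ≠ u := Finset.ne_of_mem_erase (Finset.mem_of_mem_erase ha)
          have hua : u ≠ a := hau.symm
          have hn3 : 3 ≤ n := three_le_n huv hau hav
          calc ∑ b : Fin n, ∫ ω, A ω u a * (A ω u b * A ω u v)
              = ∑ b ∈ Finset.univ.erase u, ∫ ω, A ω u a * (A ω u b * A ω u v) :=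
                (Finset.sum_erase _ (by simp [hdiag])).symm
            _ = (∫ ω, A ω u a * (A ω u v * A ω u v))
                + ∑ b ∈ (Finset.univ.erase u).erase v, ∫ ω, A ω u a * (A ω u b * A ω u v) :=
                (Finset.add_sum_erase _ _ (Finset.mem_erase.mpr ⟨hvu, Finset.mem_univ v⟩)).symm
            _ = (∫ ω, A ω u a * (A ω u v * A ω u v))
                + ((∫ ω, A ω u a * (A ω u a * A ω u v))
                  + ∑ b ∈ ((Finset.univ.erase u).erase v).erase a,
                      ∫ ω, A ω u a * (A ω u b * A ω u v)) :=
                congrArg (fun t => (∫ ω, A ω u a * (A ω u v * A ω u v)) + t)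
                  (Finset.add_sum_erase _ _
                    (Finset.mem_erase.mpr ⟨hav, Finset.mem_erase.mpr ⟨hau, Finset.mem_univ a⟩⟩)).symm
            _ = 2 * p ^ 2 + ((n:ℝ) - 3) * p ^ 3 := by
                rw [int_triple hp hmeas hsymm h01 hbern hindep hua huv huv,
                  card3_zy rfl (edg_ne hua huv (fun h => hav h.2) (fun h => hua h.2.symm)),
                  int_triple hp hmeas hsymm h01 hbern hindep hua hua huv,
                  card3_yx rfl (edg_ne hua huv (fun h => hav h.2) (fun h => hua h.2.symm))]
                have : ∑ b ∈ ((Finset.univ.erase u).erase v).erase a,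
                    ∫ ω, A ω u a * (A ω u b * A ω u v) = ((n:ℝ) - 3) * p ^ 3 := by
                  calc ∑ b ∈ ((Finset.univ.erase u).erase v).erase a,
                      ∫ ω, A ω u a * (A ω u b * A ω u v)
                      = ∑ _b ∈ ((Finset.univ.erase u).erase v).erase a, p ^ 3 := by
                        refine Finset.sum_congr rfl fun b hb => ?_
                        have hba : b ≠ a := (Finset.mem_erase.mp hb).1
                        have hbv : b ≠ v :=
                          (Finset.mem_erase.mp (Finset.mem_of_mem_erase hb)).1
                        have hbu : b ≠ u := Finset.ne_of_mem_erase
                          (Finset.mem_of_mem_erase (Finset.mem_of_mem_erase hb))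
                        rw [int_triple hp hmeas hsymm h01 hbern hindep hua hbu.symm huv,
                          card3_3 (edg_ne hua hbu.symm (fun h => hba h.2.symm)
                              (fun h => hbu h.1.symm))
                            (edg_ne hua huv (fun h => hav h.2) (fun h => hua h.2.symm))
                            (edg_ne hbu.symm huv (fun h => hbv h.2) (fun h => hbu h.2))]
                  _ = ((n:ℝ) - 3) * p ^ 3 := by
                      rw [Finset.sum_const, card_erase3 hvu hav hau, nsmul_eq_mul,
                        cast_sub_three hn3]
                rw [this]; ring
        rw [hA, Finset.sum_congr rfl hB, Finset.sum_const, card_erase2 hvu, nsmul_eq_mul,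
          cast_sub_two hn2]
        ring

lemma Ev3 {u v : Fin n} (huv : u ≠ v) :
    ∑ a : Fin n, ∑ b : Fin n, ∫ ω, A ω u a * (A ω u v * A ω v b)
      = (p + ((n:ℝ) - 2) * p ^ 2) + ((n:ℝ) - 2) * (p ^ 2 + ((n:ℝ) - 2) * p ^ 3) := by
  have hn2 : 2 ≤ n := two_le_n huv
  have hvu : v ≠ u := huv.symm
  calc ∑ a : Fin n, ∑ b : Fin n, ∫ ω, A ω u a * (A ω u v * A ω v b)
      = ∑ a ∈ Finset.univ.erase u, ∑ b : Fin n, ∫ ω, A ω u a * (A ω u v * A ω v b) :=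
        (Finset.sum_erase _ (by simp [hdiag])).symm
    _ = (∑ b : Fin n, ∫ ω, A ω u v * (A ω u v * A ω v b))
        + ∑ a ∈ (Finset.univ.erase u).erase v,
            ∑ b : Fin n, ∫ ω, A ω u a * (A ω u v * A ω v b) :=
        (Finset.add_sum_erase _ _ (Finset.mem_erase.mpr ⟨hvu, Finset.mem_univ v⟩)).symm
    _ = (p + ((n:ℝ) - 2) * p ^ 2) + ((n:ℝ) - 2) * (p ^ 2 + ((n:ℝ) - 2) * p ^ 3) := by
        have hA : ∑ b : Fin n, ∫ ω, A ω u v * (A ω u v * A ω v b)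
            = p + ((n:ℝ) - 2) * p ^ 2 := by
          calc ∑ b : Fin n, ∫ ω, A ω u v * (A ω u v * A ω v b)
              = ∑ b ∈ Finset.univ.erase v, ∫ ω, A ω u v * (A ω u v * A ω v b) :=
                (Finset.sum_erase _ (by simp [hdiag])).symm
            _ = (∫ ω, A ω u v * (A ω u v * A ω v u))
                + ∑ b ∈ (Finset.univ.erase v).erase u, ∫ ω, A ω u v * (A ω u v * A ω v b) :=
                (Finset.add_sum_erase _ _ (Finset.mem_erase.mpr ⟨huv, Finset.mem_univ u⟩)).symm
            _ = p + ((n:ℝ) - 2) * p ^ 2 := by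
                rw [int_triple hp hmeas hsymm h01 hbern hindep huv huv hvu, card3_1 rfl (edg_symm hvu), pow_one]
                congr 1
                calc ∑ b ∈ (Finset.univ.erase v).erase u, ∫ ω, A ω u v * (A ω u v * A ω v b)
                    = ∑ _b ∈ (Finset.univ.erase v).erase u, p ^ 2 := by
                      refine Finset.sum_congr rfl fun b hb => ?_
                      have hbu : b ≠ u := (Finset.mem_erase.mp hb).1
                      have hbv : b ≠ v := Finset.ne_of_mem_erase (Finset.mem_of_mem_erase hb)
                      rw [int_triple hp hmeas hsymm h01 hbern hindep huv huv hbv.symm,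
                        card3_yx rfl (edg_ne huv hbv.symm (fun h => huv h.1)
                          (fun h => hbu h.1.symm))]
                  _ = ((n:ℝ) - 2) * p ^ 2 := by
                      rw [Finset.sum_const, card_erase2 huv, nsmul_eq_mul, cast_sub_two hn2]
        have hB : ∀ a ∈ (Finset.univ.erase u).erase v,
            (∑ b : Fin n, ∫ ω, A ω u a * (A ω u v * A ω v b))
              = p ^ 2 + ((n:ℝ) - 2) * p ^ 3 := by
          intro a ha
          have hav : a ≠ v := (Finset.mem_erase.mp ha).1
          have hau : a ≠ u := Finset.ne_of_mem_erase (Finset.mem_of_mem_erase ha)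
          have hua : u ≠ a := hau.symm
          calc ∑ b : Fin n, ∫ ω, A ω u a * (A ω u v * A ω v b)
              = ∑ b ∈ Finset.univ.erase v, ∫ ω, A ω u a * (A ω u v * A ω v b) :=
                (Finset.sum_erase _ (by simp [hdiag])).symm
            _ = (∫ ω, A ω u a * (A ω u v * A ω v u))
                + ∑ b ∈ (Finset.univ.erase v).erase u, ∫ ω, A ω u a * (A ω u v * A ω v b) :=
                (Finset.add_sum_erase _ _ (Finset.mem_erase.mpr ⟨huv, Finset.mem_univ u⟩)).symm
            _ = p ^ 2 + ((n:ℝ) - 2) * p ^ 3 := by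
                rw [int_triple hp hmeas hsymm h01 hbern hindep hua huv hvu,
                  card3_zy (edg_symm hvu)
                    (edg_ne hua huv (fun h => hav h.2) (fun h => huv h.1))]
                congr 1
                calc ∑ b ∈ (Finset.univ.erase v).erase u, ∫ ω, A ω u a * (A ω u v * A ω v b)
                    = ∑ _b ∈ (Finset.univ.erase v).erase u, p ^ 3 := by
                      refine Finset.sum_congr rfl fun b hb => ?_
                      have hbu : b ≠ u := (Finset.mem_erase.mp hb).1
                      have hbv : b ≠ v := Finset.ne_of_mem_erase (Finset.mem_of_mem_erase hb)
                      rw [int_triple hp hmeas hsymm h01 hbern hindep hua huv hbv.symm,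
                        card3_3 (edg_ne hua huv (fun h => hav h.2) (fun h => huv h.1))
                          (edg_ne hua hbv.symm (fun h => huv h.1) (fun h => hbu h.1.symm))
                          (edg_ne huv hbv.symm (fun h => huv h.1) (fun h => hbu h.1.symm))]
                  _ = ((n:ℝ) - 2) * p ^ 3 := by
                      rw [Finset.sum_const, card_erase2 huv, nsmul_eq_mul, cast_sub_two hn2]
        rw [hA, Finset.sum_congr rfl hB, Finset.sum_const, card_erase2 hvu, nsmul_eq_mul,
          cast_sub_two hn2]

lemma Ev5 {u v : Fin n} (huv : u ≠ v) :
    ∑ l : Fin n, ∑ a : Fin n, ∫ ω, A ω u a * (A ω u l * A ω l v)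
      = ((n:ℝ) - 2) * (p ^ 2 + ((n:ℝ) - 2) * p ^ 3) := by
  have hn2 : 2 ≤ n := two_le_n huv
  have hvu : v ≠ u := huv.symm
  calc ∑ l : Fin n, ∑ a : Fin n, ∫ ω, A ω u a * (A ω u l * A ω l v)
      = ∑ l ∈ Finset.univ.erase u, ∑ a : Fin n, ∫ ω, A ω u a * (A ω u l * A ω l v) :=
        (Finset.sum_erase _ (by simp [hdiag])).symm
    _ = ∑ l ∈ (Finset.univ.erase u).erase v, ∑ a : Fin n, ∫ ω, A ω u a * (A ω u l * A ω l v) :=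
        (Finset.sum_erase _ (by simp [hdiag])).symm
    _ = ((n:ℝ) - 2) * (p ^ 2 + ((n:ℝ) - 2) * p ^ 3) := by
        have hB : ∀ l ∈ (Finset.univ.erase u).erase v,
            (∑ a : Fin n, ∫ ω, A ω u a * (A ω u l * A ω l v))
              = p ^ 2 + ((n:ℝ) - 2) * p ^ 3 := by
          intro l hl
          have hlv : l ≠ v := (Finset.mem_erase.mp hl).1
          have hlu : l ≠ u := Finset.ne_of_mem_erase (Finset.mem_of_mem_erase hl)
          have hul : u ≠ l := hlu.symm
          calc ∑ a : Fin n, ∫ ω, A ω u a * (A ω u l * A ω l v)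
              = ∑ a ∈ Finset.univ.erase u, ∫ ω, A ω u a * (A ω u l * A ω l v) :=
                (Finset.sum_erase _ (by simp [hdiag])).symm
            _ = (∫ ω, A ω u l * (A ω u l * A ω l v))
                + ∑ a ∈ (Finset.univ.erase u).erase l, ∫ ω, A ω u a * (A ω u l * A ω l v) :=
                (Finset.add_sum_erase _ _ (Finset.mem_erase.mpr ⟨hlu, Finset.mem_univ l⟩)).symm
            _ = p ^ 2 + ((n:ℝ) - 2) * p ^ 3 := by
                rw [int_triple hp hmeas hsymm h01 hbern hindep hul hul hlv,
                  card3_yx rfl (edg_ne hul hlv (fun h => hlu h.1.symm) (fun h => huv h.1))]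
                congr 1
                calc ∑ a ∈ (Finset.univ.erase u).erase l, ∫ ω, A ω u a * (A ω u l * A ω l v)
                    = ∑ _a ∈ (Finset.univ.erase u).erase l, p ^ 3 := by
                      refine Finset.sum_congr rfl fun a ha => ?_
                      have hal : a ≠ l := (Finset.mem_erase.mp ha).1
                      have hau : a ≠ u := Finset.ne_of_mem_erase (Finset.mem_of_mem_erase ha)
                      rw [int_triple hp hmeas hsymm h01 hbern hindep hau.symm hul hlv,
                        card3_3 (edg_ne hau.symm hul (fun h => hal h.2) (fun h => hlu h.1.symm))
                          (edg_ne hau.symm hlv (fun h => hlu h.1.symm) (fun h => huv h.1))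
                          (edg_ne hul hlv (fun h => hlu h.1.symm) (fun h => huv h.1))]
                  _ = ((n:ℝ) - 2) * p ^ 3 := by
                      rw [Finset.sum_const, card_erase2 hlu, nsmul_eq_mul, cast_sub_two hn2]
        rw [Finset.sum_congr rfl hB, Finset.sum_const, card_erase2 hvu, nsmul_eq_mul,
          cast_sub_two hn2]

lemma Ev6 {u v : Fin n} (huv : u ≠ v) :
    ∑ k : Fin n, ∑ b : Fin n, ∫ ω, A ω u k * (A ω k b * A ω k v)
      = ((n:ℝ) - 2) * (p ^ 2 + (p ^ 2 + ((n:ℝ) - 3) * p ^ 3)) := by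
  have hn2 : 2 ≤ n := two_le_n huv
  have hvu : v ≠ u := huv.symm
  calc ∑ k : Fin n, ∑ b : Fin n, ∫ ω, A ω u k * (A ω k b * A ω k v)
      = ∑ k ∈ Finset.univ.erase u, ∑ b : Fin n, ∫ ω, A ω u k * (A ω k b * A ω k v) :=
        (Finset.sum_erase _ (by simp [hdiag])).symm
    _ = ∑ k ∈ (Finset.univ.erase u).erase v, ∑ b : Fin n, ∫ ω, A ω u k * (A ω k b * A ω k v) :=
        (Finset.sum_erase _ (by simp [hdiag])).symm
    _ = ((n:ℝ) - 2) * (p ^ 2 + (p ^ 2 + ((n:ℝ) - 3) * p ^ 3)) := by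
        have hB : ∀ k ∈ (Finset.univ.erase u).erase v,
            (∑ b : Fin n, ∫ ω, A ω u k * (A ω k b * A ω k v))
              = p ^ 2 + (p ^ 2 + ((n:ℝ) - 3) * p ^ 3) := by
          intro k hk
          have hkv : k ≠ v := (Finset.mem_erase.mp hk).1
          have hku : k ≠ u := Finset.ne_of_mem_erase (Finset.mem_of_mem_erase hk)
          have huk : u ≠ k := hku.symm
          have hn3 : 3 ≤ n := three_le_n huv hku hkv
          calc ∑ b : Fin n, ∫ ω, A ω u k * (A ω k b * A ω k v)
              = ∑ b ∈ Finset.univ.erase k, ∫ ω, A ω u k * (A ω k b * A ω k v) :=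
                (Finset.sum_erase _ (by simp [hdiag])).symm
            _ = (∫ ω, A ω u k * (A ω k u * A ω k v))
                + ∑ b ∈ (Finset.univ.erase k).erase u, ∫ ω, A ω u k * (A ω k b * A ω k v) :=
                (Finset.add_sum_erase _ _ (Finset.mem_erase.mpr ⟨huk, Finset.mem_univ u⟩)).symm
            _ = (∫ ω, A ω u k * (A ω k u * A ω k v))
                + ((∫ ω, A ω u k * (A ω k v * A ω k v))
                  + ∑ b ∈ ((Finset.univ.erase k).erase u).erase v,
                      ∫ ω, A ω u k * (A ω k b * A ω k v)) :=
                congrArg (fun t => (∫ ω, A ω u k * (A ω k u * A ω k v)) + t)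
                  (Finset.add_sum_erase _ _
                    (Finset.mem_erase.mpr ⟨hvu, Finset.mem_erase.mpr
                      ⟨hkv.symm, Finset.mem_univ v⟩⟩)).symm
            _ = p ^ 2 + (p ^ 2 + ((n:ℝ) - 3) * p ^ 3) := by
                rw [int_triple hp hmeas hsymm h01 hbern hindep huk hku hkv,
                  card3_yx (edg_symm hku)
                    (edg_ne huk hkv (fun h => huk h.1) (fun h => huv h.1)),
                  int_triple hp hmeas hsymm h01 hbern hindep huk hkv hkv,
                  card3_zy rfl (edg_ne huk hkv (fun h => huk h.1) (fun h => huv h.1))]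
                have : ∑ b ∈ ((Finset.univ.erase k).erase u).erase v,
                    ∫ ω, A ω u k * (A ω k b * A ω k v) = ((n:ℝ) - 3) * p ^ 3 := by
                  calc ∑ b ∈ ((Finset.univ.erase k).erase u).erase v,
                      ∫ ω, A ω u k * (A ω k b * A ω k v)
                      = ∑ _b ∈ ((Finset.univ.erase k).erase u).erase v, p ^ 3 := by
                        refine Finset.sum_congr rfl fun b hb => ?_
                        have hbv : b ≠ v := (Finset.mem_erase.mp hb).1
                        have hbu : b ≠ u :=
                          (Finset.mem_erase.mp (Finset.mem_of_mem_erase hb)).1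
                        have hbk : b ≠ k := Finset.ne_of_mem_erase
                          (Finset.mem_of_mem_erase (Finset.mem_of_mem_erase hb))
                        rw [int_triple hp hmeas hsymm h01 hbern hindep huk hbk.symm hkv,
                          card3_3 (edg_ne huk hbk.symm (fun h => huk h.1)
                              (fun h => hbu h.1.symm))
                            (edg_ne huk hkv (fun h => huk h.1) (fun h => huv h.1))
                            (edg_ne hbk.symm hkv (fun h => hbv h.2) (fun h => hkv h.1))]
                  _ = ((n:ℝ) - 3) * p ^ 3 := by
                      rw [Finset.sum_const, card_erase3 huk hvu hkv.symm, nsmul_eq_mul,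
                        cast_sub_three hn3]
                rw [this]
        rw [Finset.sum_congr rfl hB, Finset.sum_const, card_erase2 hvu, nsmul_eq_mul,
          cast_sub_two hn2]

lemma Ev8 {u v : Fin n} (huv : u ≠ v) :
    ∑ k : Fin n, ∑ l : Fin n, ∫ ω, A ω u k * (A ω k l * A ω l v)
      = (p + ((n:ℝ) - 2) * p ^ 2) + ((n:ℝ) - 2) * (p ^ 2 + ((n:ℝ) - 3) * p ^ 3) := by
  have hn2 : 2 ≤ n := two_le_n huv
  have hvu : v ≠ u := huv.symm
  calc ∑ k : Fin n, ∑ l : Fin n, ∫ ω, A ω u k * (A ω k l * A ω l v)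
      = ∑ k ∈ Finset.univ.erase u, ∑ l : Fin n, ∫ ω, A ω u k * (A ω k l * A ω l v) :=
        (Finset.sum_erase _ (by simp [hdiag])).symm
    _ = (∑ l : Fin n, ∫ ω, A ω u v * (A ω v l * A ω l v))
        + ∑ k ∈ (Finset.univ.erase u).erase v,
            ∑ l : Fin n, ∫ ω, A ω u k * (A ω k l * A ω l v) :=
        (Finset.add_sum_erase _ _ (Finset.mem_erase.mpr ⟨hvu, Finset.mem_univ v⟩)).symm
    _ = (p + ((n:ℝ) - 2) * p ^ 2) + ((n:ℝ) - 2) * (p ^ 2 + ((n:ℝ) - 3) * p ^ 3) := by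
        have hA : ∑ l : Fin n, ∫ ω, A ω u v * (A ω v l * A ω l v)
            = p + ((n:ℝ) - 2) * p ^ 2 := by
          calc ∑ l : Fin n, ∫ ω, A ω u v * (A ω v l * A ω l v)
              = ∑ l ∈ Finset.univ.erase v, ∫ ω, A ω u v * (A ω v l * A ω l v) :=
                (Finset.sum_erase _ (by simp [hdiag])).symm
            _ = (∫ ω, A ω u v * (A ω v u * A ω u v))
                + ∑ l ∈ (Finset.univ.erase v).erase u, ∫ ω, A ω u v * (A ω v l * A ω l v) :=
                (Finset.add_sum_erase _ _ (Finset.mem_erase.mpr ⟨huv, Finset.mem_univ u⟩)).symm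
            _ = p + ((n:ℝ) - 2) * p ^ 2 := by
                rw [int_triple hp hmeas hsymm h01 hbern hindep huv hvu huv, card3_1 (edg_symm hvu) rfl, pow_one]
                congr 1
                calc ∑ l ∈ (Finset.univ.erase v).erase u, ∫ ω, A ω u v * (A ω v l * A ω l v)
                    = ∑ _l ∈ (Finset.univ.erase v).erase u, p ^ 2 := by
                      refine Finset.sum_congr rfl fun l hl => ?_
                      have hlu : l ≠ u := (Finset.mem_erase.mp hl).1
                      have hlv : l ≠ v := Finset.ne_of_mem_erase (Finset.mem_of_mem_erase hl)
                      rw [int_triple hp hmeas hsymm h01 hbern hindep huv hlv.symm hlv,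
                        card3_zy (edg_symm hlv)
                          (edg_ne huv hlv.symm (fun h => huv h.1) (fun h => hlu h.1.symm))]
                  _ = ((n:ℝ) - 2) * p ^ 2 := by
                      rw [Finset.sum_const, card_erase2 huv, nsmul_eq_mul, cast_sub_two hn2]
        have hB : ∀ k ∈ (Finset.univ.erase u).erase v,
            (∑ l : Fin n, ∫ ω, A ω u k * (A ω k l * A ω l v))
              = p ^ 2 + ((n:ℝ) - 3) * p ^ 3 := by
          intro k hk
          have hkv : k ≠ v := (Finset.mem_erase.mp hk).1
          have hku : k ≠ u := Finset.ne_of_mem_erase (Finset.mem_of_mem_erase hk)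
          have huk : u ≠ k := hku.symm
          have hn3 : 3 ≤ n := three_le_n huv hku hkv
          calc ∑ l : Fin n, ∫ ω, A ω u k * (A ω k l * A ω l v)
              = ∑ l ∈ Finset.univ.erase k, ∫ ω, A ω u k * (A ω k l * A ω l v) :=
                (Finset.sum_erase _ (by simp [hdiag])).symm
            _ = ∑ l ∈ (Finset.univ.erase k).erase v, ∫ ω, A ω u k * (A ω k l * A ω l v) :=
                (Finset.sum_erase _ (by simp [hdiag])).symm
            _ = (∫ ω, A ω u k * (A ω k u * A ω u v))
                + ∑ l ∈ ((Finset.univ.erase k).erase v).erase u,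
                    ∫ ω, A ω u k * (A ω k l * A ω l v) :=
                (Finset.add_sum_erase _ _ (Finset.mem_erase.mpr
                  ⟨huv, Finset.mem_erase.mpr ⟨huk, Finset.mem_univ u⟩⟩)).symm
            _ = p ^ 2 + ((n:ℝ) - 3) * p ^ 3 := by
                rw [int_triple hp hmeas hsymm h01 hbern hindep huk hku huv,
                  card3_yx (edg_symm hku)
                    (edg_ne huk huv (fun h => hkv h.2) (fun h => huv h.1))]
                congr 1
                calc ∑ l ∈ ((Finset.univ.erase k).erase v).erase u,
                    ∫ ω, A ω u k * (A ω k l * A ω l v)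
                    = ∑ _l ∈ ((Finset.univ.erase k).erase v).erase u, p ^ 3 := by
                      refine Finset.sum_congr rfl fun l hl => ?_
                      have hlu : l ≠ u := (Finset.mem_erase.mp hl).1
                      have hlv : l ≠ v :=
                        (Finset.mem_erase.mp (Finset.mem_of_mem_erase hl)).1
                      have hlk : l ≠ k := Finset.ne_of_mem_erase
                        (Finset.mem_of_mem_erase (Finset.mem_of_mem_erase hl))
                      rw [int_triple hp hmeas hsymm h01 hbern hindep huk hlk.symm hlv,
                        card3_3 (edg_ne huk hlk.symm (fun h => huk h.1)
                            (fun h => hlu h.1.symm))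
                          (edg_ne huk hlv (fun h => hlu h.1.symm) (fun h => huv h.1))
                          (edg_ne hlk.symm hlv (fun h => hlk h.1.symm) (fun h => hkv h.1))]
                  _ = ((n:ℝ) - 3) * p ^ 3 := by
                      rw [Finset.sum_const, card_erase3 hkv.symm huv huk, nsmul_eq_mul,
                        cast_sub_three hn3]
        rw [hA, Finset.sum_congr rfl hB, Finset.sum_const, card_erase2 hvu, nsmul_eq_mul,
          cast_sub_two hn2]

lemma Ev1d (u : Fin n) :
    ∑ a : Fin n, ∑ b : Fin n, ∑ c : Fin n, ∫ ω, A ω u a * (A ω u b * A ω u c)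
      = ((n:ℝ) - 1) * ((p + ((n:ℝ) - 2) * p ^ 2)
          + ((n:ℝ) - 2) * (p ^ 2 + (p ^ 2 + ((n:ℝ) - 3) * p ^ 3))) := by
  have hn1 : 1 ≤ n := u.pos
  calc ∑ a : Fin n, ∑ b : Fin n, ∑ c : Fin n, ∫ ω, A ω u a * (A ω u b * A ω u c)
      = ∑ a ∈ Finset.univ.erase u, ∑ b : Fin n, ∑ c : Fin n,
          ∫ ω, A ω u a * (A ω u b * A ω u c) :=
        (Finset.sum_erase _ (by simp [hdiag])).symm
    _ = ∑ a ∈ Finset.univ.erase u, ((p + ((n:ℝ) - 2) * p ^ 2)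
          + ((n:ℝ) - 2) * (p ^ 2 + (p ^ 2 + ((n:ℝ) - 3) * p ^ 3))) := by
        refine Finset.sum_congr rfl fun a ha => ?_
        have hau : a ≠ u := Finset.ne_of_mem_erase ha
        have hua : u ≠ a := hau.symm
        have hn2 : 2 ≤ n := two_le_n hau
        calc ∑ b : Fin n, ∑ c : Fin n, ∫ ω, A ω u a * (A ω u b * A ω u c)
            = ∑ b ∈ Finset.univ.erase u, ∑ c : Fin n, ∫ ω, A ω u a * (A ω u b * A ω u c) :=
              (Finset.sum_erase _ (by simp [hdiag])).symm
          _ = (∑ c : Fin n, ∫ ω, A ω u a * (A ω u a * A ω u c))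
              + ∑ b ∈ (Finset.univ.erase u).erase a,
                  ∑ c : Fin n, ∫ ω, A ω u a * (A ω u b * A ω u c) :=
              (Finset.add_sum_erase _ _ (Finset.mem_erase.mpr ⟨hau, Finset.mem_univ a⟩)).symm
          _ = (p + ((n:ℝ) - 2) * p ^ 2)
              + ((n:ℝ) - 2) * (p ^ 2 + (p ^ 2 + ((n:ℝ) - 3) * p ^ 3)) := by
              have hA : ∑ c : Fin n, ∫ ω, A ω u a * (A ω u a * A ω u c)
                  = p + ((n:ℝ) - 2) * p ^ 2 := by
                calc ∑ c : Fin n, ∫ ω, A ω u a * (A ω u a * A ω u c)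
                    = ∑ c ∈ Finset.univ.erase u, ∫ ω, A ω u a * (A ω u a * A ω u c) :=
                      (Finset.sum_erase _ (by simp [hdiag])).symm
                  _ = (∫ ω, A ω u a * (A ω u a * A ω u a))
                      + ∑ c ∈ (Finset.univ.erase u).erase a,
                          ∫ ω, A ω u a * (A ω u a * A ω u c) :=
                      (Finset.add_sum_erase _ _
                        (Finset.mem_erase.mpr ⟨hau, Finset.mem_univ a⟩)).symm
                  _ = p + ((n:ℝ) - 2) * p ^ 2 := by
                      rw [int_triple hp hmeas hsymm h01 hbern hindep hua hua hua, card3_1 rfl rfl, pow_one]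
                      congr 1
                      calc ∑ c ∈ (Finset.univ.erase u).erase a,
                          ∫ ω, A ω u a * (A ω u a * A ω u c)
                          = ∑ _c ∈ (Finset.univ.erase u).erase a, p ^ 2 := by
                            refine Finset.sum_congr rfl fun c hc => ?_
                            have hca : c ≠ a := (Finset.mem_erase.mp hc).1
                            have hcu : c ≠ u :=
                              Finset.ne_of_mem_erase (Finset.mem_of_mem_erase hc)
                            rw [int_triple hp hmeas hsymm h01 hbern hindep hua hua hcu.symm,
                              card3_yx rfl (edg_ne hua hcu.symm (fun h => hca h.2.symm)
                                (fun h => hcu h.1.symm))]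
                        _ = ((n:ℝ) - 2) * p ^ 2 := by
                            rw [Finset.sum_const, card_erase2 hau, nsmul_eq_mul,
                              cast_sub_two hn2]
              have hB : ∀ b ∈ (Finset.univ.erase u).erase a,
                  (∑ c : Fin n, ∫ ω, A ω u a * (A ω u b * A ω u c))
                    = p ^ 2 + (p ^ 2 + ((n:ℝ) - 3) * p ^ 3) := by
                intro b hb
                have hba : b ≠ a := (Finset.mem_erase.mp hb).1
                have hbu : b ≠ u := Finset.ne_of_mem_erase (Finset.mem_of_mem_erase hb)
                have hn3 : 3 ≤ n := three_le_n hua hbu hba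
                have hxy : edg u a hua ≠ edg u b hbu.symm :=
                  edg_ne hua hbu.symm (fun h => hba h.2.symm) (fun h => hbu h.1.symm)
                calc ∑ c : Fin n, ∫ ω, A ω u a * (A ω u b * A ω u c)
                    = ∑ c ∈ Finset.univ.erase u, ∫ ω, A ω u a * (A ω u b * A ω u c) :=
                      (Finset.sum_erase _ (by simp [hdiag])).symm
                  _ = (∫ ω, A ω u a * (A ω u b * A ω u a))
                      + ∑ c ∈ (Finset.univ.erase u).erase a,
                          ∫ ω, A ω u a * (A ω u b * A ω u c) :=
                      (Finset.add_sum_erase _ _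
                        (Finset.mem_erase.mpr ⟨hau, Finset.mem_univ a⟩)).symm
                  _ = (∫ ω, A ω u a * (A ω u b * A ω u a))
                      + ((∫ ω, A ω u a * (A ω u b * A ω u b))
                        + ∑ c ∈ ((Finset.univ.erase u).erase a).erase b,
                            ∫ ω, A ω u a * (A ω u b * A ω u c)) :=
                      congrArg (fun t => (∫ ω, A ω u a * (A ω u b * A ω u a)) + t)
                        (Finset.add_sum_erase _ _ (Finset.mem_erase.mpr
                          ⟨hba, Finset.mem_erase.mpr ⟨hbu, Finset.mem_univ b⟩⟩)).symm
                  _ = p ^ 2 + (p ^ 2 + ((n:ℝ) - 3) * p ^ 3) := by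
                      rw [int_triple hp hmeas hsymm h01 hbern hindep hua hbu.symm hua, card3_zx rfl hxy,
                        int_triple hp hmeas hsymm h01 hbern hindep hua hbu.symm hbu.symm, card3_zy rfl hxy]
                      have : ∑ c ∈ ((Finset.univ.erase u).erase a).erase b,
                          ∫ ω, A ω u a * (A ω u b * A ω u c) = ((n:ℝ) - 3) * p ^ 3 := by
                        calc ∑ c ∈ ((Finset.univ.erase u).erase a).erase b,
                            ∫ ω, A ω u a * (A ω u b * A ω u c)
                            = ∑ _c ∈ ((Finset.univ.erase u).erase a).erase b, p ^ 3 := by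
                              refine Finset.sum_congr rfl fun c hc => ?_
                              have hcb : c ≠ b := (Finset.mem_erase.mp hc).1
                              have hca : c ≠ a :=
                                (Finset.mem_erase.mp (Finset.mem_of_mem_erase hc)).1
                              have hcu : c ≠ u := Finset.ne_of_mem_erase
                                (Finset.mem_of_mem_erase (Finset.mem_of_mem_erase hc))
                              rw [int_triple hp hmeas hsymm h01 hbern hindep hua hbu.symm hcu.symm,
                                card3_3 hxy
                                  (edg_ne hua hcu.symm (fun h => hca h.2.symm)
                                    (fun h => hcu h.1.symm))
                                  (edg_ne hbu.symm hcu.symm (fun h => hcb h.2.symm)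
                                    (fun h => hcu h.1.symm))]
                        _ = ((n:ℝ) - 3) * p ^ 3 := by
                            rw [Finset.sum_const, card_erase3 hau hba hbu, nsmul_eq_mul,
                              cast_sub_three hn3]
                      rw [this]
              rw [hA, Finset.sum_congr rfl hB, Finset.sum_const, card_erase2 hau,
                nsmul_eq_mul, cast_sub_two hn2]
    _ = ((n:ℝ) - 1) * ((p + ((n:ℝ) - 2) * p ^ 2)
          + ((n:ℝ) - 2) * (p ^ 2 + (p ^ 2 + ((n:ℝ) - 3) * p ^ 3))) := by
        rw [Finset.sum_const, card_erase1, nsmul_eq_mul, cast_sub_one hn1]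

lemma Ev6d (u : Fin n) :
    ∑ k : Fin n, ∑ b : Fin n, ∫ ω, A ω u k * (A ω k b * A ω k u)
      = ((n:ℝ) - 1) * (p + ((n:ℝ) - 2) * p ^ 2) := by
  have hn1 : 1 ≤ n := u.pos
  calc ∑ k : Fin n, ∑ b : Fin n, ∫ ω, A ω u k * (A ω k b * A ω k u)
      = ∑ k ∈ Finset.univ.erase u, ∑ b : Fin n, ∫ ω, A ω u k * (A ω k b * A ω k u) :=
        (Finset.sum_erase _ (by simp [hdiag])).symm
    _ = ∑ k ∈ Finset.univ.erase u, (p + ((n:ℝ) - 2) * p ^ 2) := by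
        refine Finset.sum_congr rfl fun k hk => ?_
        have hku : k ≠ u := Finset.ne_of_mem_erase hk
        have huk : u ≠ k := hku.symm
        have hn2 : 2 ≤ n := two_le_n hku
        calc ∑ b : Fin n, ∫ ω, A ω u k * (A ω k b * A ω k u)
            = ∑ b ∈ Finset.univ.erase k, ∫ ω, A ω u k * (A ω k b * A ω k u) :=
              (Finset.sum_erase _ (by simp [hdiag])).symm
          _ = (∫ ω, A ω u k * (A ω k u * A ω k u))
              + ∑ b ∈ (Finset.univ.erase k).erase u, ∫ ω, A ω u k * (A ω k b * A ω k u) :=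
              (Finset.add_sum_erase _ _ (Finset.mem_erase.mpr ⟨huk, Finset.mem_univ u⟩)).symm
          _ = p + ((n:ℝ) - 2) * p ^ 2 := by
              rw [int_triple hp hmeas hsymm h01 hbern hindep huk hku hku, card3_1 (edg_symm hku) (edg_symm hku), pow_one]
              congr 1
              calc ∑ b ∈ (Finset.univ.erase k).erase u, ∫ ω, A ω u k * (A ω k b * A ω k u)
                  = ∑ _b ∈ (Finset.univ.erase k).erase u, p ^ 2 := by
                    refine Finset.sum_congr rfl fun b hb => ?_
                    have hbu : b ≠ u := (Finset.mem_erase.mp hb).1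
                    have hbk : b ≠ k := Finset.ne_of_mem_erase (Finset.mem_of_mem_erase hb)
                    rw [int_triple hp hmeas hsymm h01 hbern hindep huk hbk.symm hku,
                      card3_zx (edg_symm hku)
                        (edg_ne huk hbk.symm (fun h => huk h.1) (fun h => hbu h.1.symm))]
                _ = ((n:ℝ) - 2) * p ^ 2 := by
                    rw [Finset.sum_const, card_erase2 huk, nsmul_eq_mul, cast_sub_two hn2]
    _ = ((n:ℝ) - 1) * (p + ((n:ℝ) - 2) * p ^ 2) := by
        rw [Finset.sum_const, card_erase1, nsmul_eq_mul, cast_sub_one hn1]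

lemma Ev8d (u : Fin n) :
    ∑ k : Fin n, ∑ l : Fin n, ∫ ω, A ω u k * (A ω k l * A ω l u)
      = ((n:ℝ) - 1) * (((n:ℝ) - 2) * p ^ 3) := by
  have hn1 : 1 ≤ n := u.pos
  calc ∑ k : Fin n, ∑ l : Fin n, ∫ ω, A ω u k * (A ω k l * A ω l u)
      = ∑ k ∈ Finset.univ.erase u, ∑ l : Fin n, ∫ ω, A ω u k * (A ω k l * A ω l u) :=
        (Finset.sum_erase _ (by simp [hdiag])).symm
    _ = ∑ k ∈ Finset.univ.erase u, (((n:ℝ) - 2) * p ^ 3) := by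
        refine Finset.sum_congr rfl fun k hk => ?_
        have hku : k ≠ u := Finset.ne_of_mem_erase hk
        have huk : u ≠ k := hku.symm
        have hn2 : 2 ≤ n := two_le_n hku
        calc ∑ l : Fin n, ∫ ω, A ω u k * (A ω k l * A ω l u)
            = ∑ l ∈ Finset.univ.erase k, ∫ ω, A ω u k * (A ω k l * A ω l u) :=
              (Finset.sum_erase _ (by simp [hdiag])).symm
          _ = ∑ l ∈ (Finset.univ.erase k).erase u, ∫ ω, A ω u k * (A ω k l * A ω l u) :=
              (Finset.sum_erase _ (by simp [hdiag])).symm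
          _ = ((n:ℝ) - 2) * p ^ 3 := by
              calc ∑ l ∈ (Finset.univ.erase k).erase u, ∫ ω, A ω u k * (A ω k l * A ω l u)
                  = ∑ _l ∈ (Finset.univ.erase k).erase u, p ^ 3 := by
                    refine Finset.sum_congr rfl fun l hl => ?_
                    have hlu : l ≠ u := (Finset.mem_erase.mp hl).1
                    have hlk : l ≠ k := Finset.ne_of_mem_erase (Finset.mem_of_mem_erase hl)
                    rw [int_triple hp hmeas hsymm h01 hbern hindep huk hlk.symm hlu,
                      card3_3 (edg_ne huk hlk.symm (fun h => huk h.1)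
                          (fun h => hlu h.1.symm))
                        (edg_ne huk hlu (fun h => hlu h.1.symm) (fun h => hlk h.2.symm))
                        (edg_ne hlk.symm hlu (fun h => hlk h.1.symm) (fun h => hku h.1))]
                _ = ((n:ℝ) - 2) * p ^ 3 := by
                    rw [Finset.sum_const, card_erase2 huk, nsmul_eq_mul, cast_sub_two hn2]
    _ = ((n:ℝ) - 1) * (((n:ℝ) - 2) * p ^ 3) := by
        rw [Finset.sum_const, card_erase1, nsmul_eq_mul, cast_sub_one hn1]

end Ev

lemma int_sum2 (g : Fin n → Fin n → Ω → ℝ) (hg : ∀ a b, Integrable (g a b) ℙ) :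
    ∫ ω, ∑ a : Fin n, ∑ b : Fin n, g a b ω = ∑ a : Fin n, ∑ b : Fin n, ∫ ω, g a b ω := by
  rw [integral_finset_sum _ (fun a _ => integrable_finset_sum _ (fun b _ => hg a b))]
  exact Finset.sum_congr rfl fun a _ => integral_finset_sum _ (fun b _ => hg a b)

lemma int_sum3 (g : Fin n → Fin n → Fin n → Ω → ℝ) (hg : ∀ a b c, Integrable (g a b c) ℙ) :
    ∫ ω, ∑ a : Fin n, ∑ b : Fin n, ∑ c : Fin n, g a b c ω
      = ∑ a : Fin n, ∑ b : Fin n, ∑ c : Fin n, ∫ ω, g a b c ω := by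
  rw [integral_finset_sum _ (fun a _ => integrable_finset_sum _
    (fun b _ => integrable_finset_sum _ (fun c _ => hg a b c)))]
  exact Finset.sum_congr rfl fun a _ => int_sum2 _ (hg a)

lemma pointwise_cube (M : Matrix (Fin n) (Fin n) ℝ) (i j : Fin n) :
    ((Matrix.diagonal (fun u => ∑ x, M u x) - M) ^ 3) i j
      = (if i = j then ∑ a, ∑ b, ∑ c, M i c * (M i b * M i a) else 0)
        - (∑ a, ∑ b, M i b * (M i a * M i j))
        - (∑ a, ∑ b, M i b * (M i j * M j a))
        - (∑ a, ∑ b, M i j * (M j b * M j a))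
        + (∑ a, ∑ b, M i b * (M i a * M a j))
        + (∑ a, ∑ b, M i a * (M a b * M a j))
        + (∑ a, ∑ b, M i b * (M b j * M j a))
        - (∑ a, ∑ b, M i b * (M b a * M a j)) := by
  set d : Fin n → ℝ := fun u => ∑ x, M u x with hd
  set D : Matrix (Fin n) (Fin n) ℝ := Matrix.diagonal d with hD
  have hexp : (D - M) ^ 3
      = D * D * D - D * D * M - D * M * D - M * D * D
        + D * (M * M) + M * D * M + M * M * D - M * M * M := by noncomm_ring
  have E1 : (D * D * D) i j = if i = j then d i * d i * d i else 0 := by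
    rw [hD, Matrix.diagonal_mul_diagonal, Matrix.diagonal_mul_diagonal, Matrix.diagonal_apply]
  have E2 : (D * D * M) i j = d i * d i * M i j := by
    rw [hD, Matrix.diagonal_mul_diagonal, Matrix.diagonal_mul]
  have E3 : (D * M * D) i j = d i * M i j * d j := by
    rw [hD, Matrix.mul_diagonal, Matrix.diagonal_mul]
  have E4 : (M * D * D) i j = M i j * d j * d j := by
    rw [hD, Matrix.mul_diagonal, Matrix.mul_diagonal]
  have E5 : (D * (M * M)) i j = d i * ∑ l, M i l * M l j := by
    rw [hD, Matrix.diagonal_mul, Matrix.mul_apply]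
  have E6 : (M * D * M) i j = ∑ k, M i k * d k * M k j := by
    rw [Matrix.mul_apply]
    exact Finset.sum_congr rfl fun k _ => by rw [hD, Matrix.mul_diagonal]
  have E7 : (M * M * D) i j = (∑ k, M i k * M k j) * d j := by
    rw [hD, Matrix.mul_diagonal, Matrix.mul_apply]
  have E8 : (M * M * M) i j = ∑ k, (∑ l, M i l * M l k) * M k j := by
    rw [Matrix.mul_apply]
    exact Finset.sum_congr rfl fun k _ => by rw [Matrix.mul_apply]
  rw [hexp]
  simp only [Matrix.sub_apply, Matrix.add_apply]
  rw [E1, E2, E3, E4, E5, E6, E7, E8, hd]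
  simp only [Finset.sum_mul, Finset.mul_sum, mul_assoc]

lemma sum_comm2 {β : Type*} [AddCommMonoid β] (g : Fin n → Fin n → β) :
    ∑ a : Fin n, ∑ b : Fin n, g a b = ∑ b : Fin n, ∑ a : Fin n, g a b := Finset.sum_comm

lemma sum_comm3 {β : Type*} [AddCommMonoid β] (g : Fin n → Fin n → Fin n → β) :
    ∑ a : Fin n, ∑ b : Fin n, ∑ c : Fin n, g a b c
      = ∑ c : Fin n, ∑ b : Fin n, ∑ a : Fin n, g a b c := by
  calc ∑ a : Fin n, ∑ b : Fin n, ∑ c : Fin n, g a b c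
      = ∑ a : Fin n, ∑ c : Fin n, ∑ b : Fin n, g a b c :=
        Finset.sum_congr rfl fun a _ => Finset.sum_comm
    _ = ∑ c : Fin n, ∑ a : Fin n, ∑ b : Fin n, g a b c := Finset.sum_comm
    _ = ∑ c : Fin n, ∑ b : Fin n, ∑ a : Fin n, g a b c :=
        Finset.sum_congr rfl fun c _ => Finset.sum_comm

end ER

/-- Third matrix moment of the Erdős–Rényi Laplacian. -/
theorem stmt4 (n : ℕ) (p : ℝ) (hp : p ∈ Set.Ioo (0 : ℝ) 1)
    {Ω : Type*} [MeasureSpace Ω] [IsProbabilityMeasure (ℙ : Measure Ω)]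
    (A : Ω → Matrix (Fin n) (Fin n) ℝ)
    (hmeas : ∀ i j, Measurable fun ω => A ω i j)
    (hsymm : ∀ ω i j, A ω i j = A ω j i)
    (hdiag : ∀ ω i, A ω i i = 0)
    (h01 : ∀ ω i j, A ω i j = 0 ∨ A ω i j = 1)
    (hbern : ∀ i j, i ≠ j → (ℙ : Measure Ω) {ω | A ω i j = 1} = ENNReal.ofReal p)
    (hindep : iIndepFun
      (fun (e : {e : Fin n × Fin n // e.1 < e.2}) ω => A ω e.1.1 e.1.2) ℙ)
    (L : Ω → Matrix (Fin n) (Fin n) ℝ)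
    (hL : ∀ ω, L ω = Matrix.diagonal (fun i => ∑ j, A ω i j) - A ω) :
    ∀ i j, ∫ ω, (L ω ^ 3) i j =
      ((((n : ℝ) - 2) * ((n : ℝ) - 4) * p ^ 3 + 6 * ((n : ℝ) - 2) * p ^ 2 + 4 * p) •
        ((n : ℝ) • (1 : Matrix (Fin n) (Fin n) ℝ) - Matrix.of fun _ _ => (1 : ℝ))
        : Matrix (Fin n) (Fin n) ℝ) i j := by
  intro i j
  have hI : ∀ a b c d e f : Fin n, Integrable (fun ω => A ω a b * (A ω c d * A ω e f)) ℙ :=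
    integ3 hmeas h01
  have hpt : ∀ ω, (L ω ^ 3) i j
      = (if i = j then ∑ a, ∑ b, ∑ c, A ω i c * (A ω i b * A ω i a) else 0)
        - (∑ a, ∑ b, A ω i b * (A ω i a * A ω i j))
        - (∑ a, ∑ b, A ω i b * (A ω i j * A ω j a))
        - (∑ a, ∑ b, A ω i j * (A ω j b * A ω j a))
        + (∑ a, ∑ b, A ω i b * (A ω i a * A ω a j))
        + (∑ a, ∑ b, A ω i a * (A ω a b * A ω a j))
        + (∑ a, ∑ b, A ω i b * (A ω b j * A ω j a))
        - (∑ a, ∑ b, A ω i b * (A ω b a * A ω a j)) := fun ω => by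
    rw [hL ω]; exact pointwise_cube (A ω) i j
  by_cases hij : i = j
  · subst hij
    have hRHS : ((((n : ℝ) - 2) * ((n : ℝ) - 4) * p ^ 3 + 6 * ((n : ℝ) - 2) * p ^ 2 + 4 * p) •
        ((n : ℝ) • (1 : Matrix (Fin n) (Fin n) ℝ) - Matrix.of fun _ _ => (1 : ℝ))
        : Matrix (Fin n) (Fin n) ℝ) i i
        = (((n : ℝ) - 2) * ((n : ℝ) - 4) * p ^ 3 + 6 * ((n : ℝ) - 2) * p ^ 2 + 4 * p)
            * ((n : ℝ) - 1) := by
      simp [Matrix.smul_apply, Matrix.sub_apply, Matrix.one_apply_eq, smul_eq_mul]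
    rw [hRHS]
    have hpt2 : ∀ ω, (L ω ^ 3) i i
        = (∑ a, ∑ b, ∑ c, A ω i c * (A ω i b * A ω i a))
          + (∑ a, ∑ b, A ω i b * (A ω i a * A ω a i))
          + (∑ a, ∑ b, A ω i a * (A ω a b * A ω a i))
          + (∑ a, ∑ b, A ω i b * (A ω b i * A ω i a))
          - (∑ a, ∑ b, A ω i b * (A ω b a * A ω a i)) := fun ω => by
      rw [hpt ω]; simp [hdiag]
    have IP1 : Integrable (fun ω => ∑ a, ∑ b, ∑ c : Fin n, A ω i c * (A ω i b * A ω i a)) ℙ :=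
      integrable_finset_sum _ (fun a _ => integrable_finset_sum _
        (fun b _ => integrable_finset_sum _ (fun c _ => hI i c i b i a)))
    have IP5 : Integrable (fun ω => ∑ a, ∑ b : Fin n, A ω i b * (A ω i a * A ω a i)) ℙ :=
      integrable_finset_sum _ (fun a _ => integrable_finset_sum _ (fun b _ => hI i b i a a i))
    have IP6 : Integrable (fun ω => ∑ a, ∑ b : Fin n, A ω i a * (A ω a b * A ω a i)) ℙ :=
      integrable_finset_sum _ (fun a _ => integrable_finset_sum _ (fun b _ => hI i a a b a i))
    have IP7 : Integrable (fun ω => ∑ a, ∑ b : Fin n, A ω i b * (A ω b i * A ω i a)) ℙ :=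
      integrable_finset_sum _ (fun a _ => integrable_finset_sum _ (fun b _ => hI i b b i i a))
    have IP8 : Integrable (fun ω => ∑ a, ∑ b : Fin n, A ω i b * (A ω b a * A ω a i)) ℙ :=
      integrable_finset_sum _ (fun a _ => integrable_finset_sum _ (fun b _ => hI i b b a a i))
    calc ∫ ω, (L ω ^ 3) i i
        = (∫ ω, ∑ a, ∑ b, ∑ c : Fin n, A ω i c * (A ω i b * A ω i a))
          + (∫ ω, ∑ a, ∑ b : Fin n, A ω i b * (A ω i a * A ω a i))
          + (∫ ω, ∑ a, ∑ b : Fin n, A ω i a * (A ω a b * A ω a i))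
          + (∫ ω, ∑ a, ∑ b : Fin n, A ω i b * (A ω b i * A ω i a))
          - (∫ ω, ∑ a, ∑ b : Fin n, A ω i b * (A ω b a * A ω a i)) := by
          have IP15 : Integrable (fun ω =>
              (∑ a, ∑ b, ∑ c : Fin n, A ω i c * (A ω i b * A ω i a))
              + (∑ a, ∑ b : Fin n, A ω i b * (A ω i a * A ω a i))) ℙ := IP1.add IP5
          have IP156 : Integrable (fun ω =>
              (∑ a, ∑ b, ∑ c : Fin n, A ω i c * (A ω i b * A ω i a))
              + (∑ a, ∑ b : Fin n, A ω i b * (A ω i a * A ω a i))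
              + (∑ a, ∑ b : Fin n, A ω i a * (A ω a b * A ω a i))) ℙ := IP15.add IP6
          have IP1567 : Integrable (fun ω =>
              (∑ a, ∑ b, ∑ c : Fin n, A ω i c * (A ω i b * A ω i a))
              + (∑ a, ∑ b : Fin n, A ω i b * (A ω i a * A ω a i))
              + (∑ a, ∑ b : Fin n, A ω i a * (A ω a b * A ω a i))
              + (∑ a, ∑ b : Fin n, A ω i b * (A ω b i * A ω i a))) ℙ := IP156.add IP7
          simp only [hpt2]
          rw [integral_sub IP1567 IP8, integral_add IP156 IP7, integral_add IP15 IP6,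
            integral_add IP1 IP5]
      _ = (∑ a, ∑ b, ∑ c : Fin n, ∫ ω, A ω i c * (A ω i b * A ω i a))
          + (∑ a, ∑ b : Fin n, ∫ ω, A ω i b * (A ω i a * A ω a i))
          + (∑ a, ∑ b : Fin n, ∫ ω, A ω i a * (A ω a b * A ω a i))
          + (∑ a, ∑ b : Fin n, ∫ ω, A ω i b * (A ω b i * A ω i a))
          - (∑ a, ∑ b : Fin n, ∫ ω, A ω i b * (A ω b a * A ω a i)) := by
          rw [int_sum3 (fun a b c ω => A ω i c * (A ω i b * A ω i a))
              (fun a b c => hI i c i b i a),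
            int_sum2 (fun a b ω => A ω i b * (A ω i a * A ω a i)) (fun a b => hI i b i a a i),
            int_sum2 (fun a b ω => A ω i a * (A ω a b * A ω a i)) (fun a b => hI i a a b a i),
            int_sum2 (fun a b ω => A ω i b * (A ω b i * A ω i a)) (fun a b => hI i b b i i a),
            int_sum2 (fun a b ω => A ω i b * (A ω b a * A ω a i)) (fun a b => hI i b b a a i)]
      _ = (((n : ℝ) - 2) * ((n : ℝ) - 4) * p ^ 3 + 6 * ((n : ℝ) - 2) * p ^ 2 + 4 * p)
            * ((n : ℝ) - 1) := by
          rw [sum_comm3 (fun a b c => ∫ ω, A ω i c * (A ω i b * A ω i a)),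
            Ev1d hp hmeas hsymm hdiag h01 hbern hindep i,
            sum_comm2 (fun a b => ∫ ω, A ω i b * (A ω i a * A ω a i)),
            Ev5d hp hmeas hsymm hdiag h01 hbern hindep i,
            Ev6d hp hmeas hsymm hdiag h01 hbern hindep i,
            show (∑ a, ∑ b : Fin n, ∫ ω, A ω i b * (A ω b i * A ω i a))
                = ∑ a, ∑ b : Fin n, ∫ ω, A ω i a * (A ω i b * A ω b i) from
              Finset.sum_congr rfl fun a _ => Finset.sum_congr rfl fun b _ => by
                congr 1; funext ω; rw [hsymm ω b i]; ring,
            Ev5d hp hmeas hsymm hdiag h01 hbern hindep i,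
            sum_comm2 (fun a b => ∫ ω, A ω i b * (A ω b a * A ω a i)),
            Ev8d hp hmeas hsymm hdiag h01 hbern hindep i]
          ring
  · have hRHS : ((((n : ℝ) - 2) * ((n : ℝ) - 4) * p ^ 3 + 6 * ((n : ℝ) - 2) * p ^ 2 + 4 * p) •
        ((n : ℝ) • (1 : Matrix (Fin n) (Fin n) ℝ) - Matrix.of fun _ _ => (1 : ℝ))
        : Matrix (Fin n) (Fin n) ℝ) i j
        = -(((n : ℝ) - 2) * ((n : ℝ) - 4) * p ^ 3 + 6 * ((n : ℝ) - 2) * p ^ 2 + 4 * p) := by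
      simp only [Matrix.smul_apply, Matrix.sub_apply, Matrix.one_apply_ne hij,
        Matrix.of_apply, smul_eq_mul, mul_zero, zero_sub, mul_neg, mul_one]
    rw [hRHS]
    have hpt2 : ∀ ω, (L ω ^ 3) i j
        = ((∑ a, ∑ b, A ω i b * (A ω i a * A ω a j))
            + (∑ a, ∑ b, A ω i a * (A ω a b * A ω a j))
            + (∑ a, ∑ b, A ω i b * (A ω b j * A ω j a)))
          - ((∑ a, ∑ b, A ω i b * (A ω i a * A ω i j))
            + (∑ a, ∑ b, A ω i b * (A ω i j * A ω j a))
            + ((∑ a, ∑ b, A ω i j * (A ω j b * A ω j a))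
              + (∑ a, ∑ b, A ω i b * (A ω b a * A ω a j)))) := fun ω => by
      rw [hpt ω, if_neg hij]; ring
    have IP2 : Integrable (fun ω => ∑ a, ∑ b : Fin n, A ω i b * (A ω i a * A ω i j)) ℙ :=
      integrable_finset_sum _ (fun a _ => integrable_finset_sum _ (fun b _ => hI i b i a i j))
    have IP3 : Integrable (fun ω => ∑ a, ∑ b : Fin n, A ω i b * (A ω i j * A ω j a)) ℙ :=
      integrable_finset_sum _ (fun a _ => integrable_finset_sum _ (fun b _ => hI i b i j j a))
    have IP4 : Integrable (fun ω => ∑ a, ∑ b : Fin n, A ω i j * (A ω j b * A ω j a)) ℙ :=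
      integrable_finset_sum _ (fun a _ => integrable_finset_sum _ (fun b _ => hI i j j b j a))
    have IP5 : Integrable (fun ω => ∑ a, ∑ b : Fin n, A ω i b * (A ω i a * A ω a j)) ℙ :=
      integrable_finset_sum _ (fun a _ => integrable_finset_sum _ (fun b _ => hI i b i a a j))
    have IP6 : Integrable (fun ω => ∑ a, ∑ b : Fin n, A ω i a * (A ω a b * A ω a j)) ℙ :=
      integrable_finset_sum _ (fun a _ => integrable_finset_sum _ (fun b _ => hI i a a b a j))
    have IP7 : Integrable (fun ω => ∑ a, ∑ b : Fin n, A ω i b * (A ω b j * A ω j a)) ℙ :=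
      integrable_finset_sum _ (fun a _ => integrable_finset_sum _ (fun b _ => hI i b b j j a))
    have IP8 : Integrable (fun ω => ∑ a, ∑ b : Fin n, A ω i b * (A ω b a * A ω a j)) ℙ :=
      integrable_finset_sum _ (fun a _ => integrable_finset_sum _ (fun b _ => hI i b b a a j))
    calc ∫ ω, (L ω ^ 3) i j
        = ((∫ ω, ∑ a, ∑ b : Fin n, A ω i b * (A ω i a * A ω a j))
            + (∫ ω, ∑ a, ∑ b : Fin n, A ω i a * (A ω a b * A ω a j))
            + (∫ ω, ∑ a, ∑ b : Fin n, A ω i b * (A ω b j * A ω j a)))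
          - ((∫ ω, ∑ a, ∑ b : Fin n, A ω i b * (A ω i a * A ω i j))
            + (∫ ω, ∑ a, ∑ b : Fin n, A ω i b * (A ω i j * A ω j a))
            + ((∫ ω, ∑ a, ∑ b : Fin n, A ω i j * (A ω j b * A ω j a))
              + (∫ ω, ∑ a, ∑ b : Fin n, A ω i b * (A ω b a * A ω a j)))) := by
          have IP56 : Integrable (fun ω =>
              (∑ a, ∑ b : Fin n, A ω i b * (A ω i a * A ω a j))
              + (∑ a, ∑ b : Fin n, A ω i a * (A ω a b * A ω a j))) ℙ := IP5.add IP6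
          have IP567 : Integrable (fun ω =>
              (∑ a, ∑ b : Fin n, A ω i b * (A ω i a * A ω a j))
              + (∑ a, ∑ b : Fin n, A ω i a * (A ω a b * A ω a j))
              + (∑ a, ∑ b : Fin n, A ω i b * (A ω b j * A ω j a))) ℙ := IP56.add IP7
          have IP48 : Integrable (fun ω =>
              (∑ a, ∑ b : Fin n, A ω i j * (A ω j b * A ω j a))
              + (∑ a, ∑ b : Fin n, A ω i b * (A ω b a * A ω a j))) ℙ := IP4.add IP8
          have IP23 : Integrable (fun ω =>
              (∑ a, ∑ b : Fin n, A ω i b * (A ω i a * A ω i j))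
              + (∑ a, ∑ b : Fin n, A ω i b * (A ω i j * A ω j a))) ℙ := IP2.add IP3
          have IP2348 : Integrable (fun ω =>
              (∑ a, ∑ b : Fin n, A ω i b * (A ω i a * A ω i j))
              + (∑ a, ∑ b : Fin n, A ω i b * (A ω i j * A ω j a))
              + ((∑ a, ∑ b : Fin n, A ω i j * (A ω j b * A ω j a))
                + (∑ a, ∑ b : Fin n, A ω i b * (A ω b a * A ω a j)))) ℙ := IP23.add IP48
          simp only [hpt2]
          rw [integral_sub IP567 IP2348, integral_add IP56 IP7, integral_add IP5 IP6,
            integral_add IP23 IP48, integral_add IP2 IP3, integral_add IP4 IP8]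
      _ = ((∑ a, ∑ b : Fin n, ∫ ω, A ω i b * (A ω i a * A ω a j))
            + (∑ a, ∑ b : Fin n, ∫ ω, A ω i a * (A ω a b * A ω a j))
            + (∑ a, ∑ b : Fin n, ∫ ω, A ω i b * (A ω b j * A ω j a)))
          - ((∑ a, ∑ b : Fin n, ∫ ω, A ω i b * (A ω i a * A ω i j))
            + (∑ a, ∑ b : Fin n, ∫ ω, A ω i b * (A ω i j * A ω j a))
            + ((∑ a, ∑ b : Fin n, ∫ ω, A ω i j * (A ω j b * A ω j a))
              + (∑ a, ∑ b : Fin n, ∫ ω, A ω i b * (A ω b a * A ω a j)))) := by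
          rw [int_sum2 (fun a b ω => A ω i b * (A ω i a * A ω a j)) (fun a b => hI i b i a a j),
            int_sum2 (fun a b ω => A ω i a * (A ω a b * A ω a j)) (fun a b => hI i a a b a j),
            int_sum2 (fun a b ω => A ω i b * (A ω b j * A ω j a)) (fun a b => hI i b b j j a),
            int_sum2 (fun a b ω => A ω i b * (A ω i a * A ω i j)) (fun a b => hI i b i a i j),
            int_sum2 (fun a b ω => A ω i b * (A ω i j * A ω j a)) (fun a b => hI i b i j j a),
            int_sum2 (fun a b ω => A ω i j * (A ω j b * A ω j a)) (fun a b => hI i j j b j a),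
            int_sum2 (fun a b ω => A ω i b * (A ω b a * A ω a j)) (fun a b => hI i b b a a j)]
      _ = -(((n : ℝ) - 2) * ((n : ℝ) - 4) * p ^ 3 + 6 * ((n : ℝ) - 2) * p ^ 2 + 4 * p) := by
          rw [Ev5 hp hmeas hsymm hdiag h01 hbern hindep hij,
            Ev6 hp hmeas hsymm hdiag h01 hbern hindep hij,
            sum_comm2 (fun a b => ∫ ω, A ω i b * (A ω b j * A ω j a)),
            show (∑ b, ∑ a : Fin n, ∫ ω, A ω i b * (A ω b j * A ω j a))
                = ∑ b, ∑ a : Fin n, ∫ ω, A ω j a * (A ω j b * A ω b i) from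
              Finset.sum_congr rfl fun b _ => Finset.sum_congr rfl fun a _ => by
                congr 1; funext ω; rw [hsymm ω i b, hsymm ω b j]; ring,
            Ev5 hp hmeas hsymm hdiag h01 hbern hindep (Ne.symm hij),
            sum_comm2 (fun a b => ∫ ω, A ω i b * (A ω i a * A ω i j)),
            Ev2 hp hmeas hsymm hdiag h01 hbern hindep hij,
            sum_comm2 (fun a b => ∫ ω, A ω i b * (A ω i j * A ω j a)),
            Ev3 hp hmeas hsymm hdiag h01 hbern hindep hij,
            show (∑ a, ∑ b : Fin n, ∫ ω, A ω i j * (A ω j b * A ω j a))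
                = ∑ a, ∑ b : Fin n, ∫ ω, A ω j a * (A ω j b * A ω j i) from
              Finset.sum_congr rfl fun a _ => Finset.sum_congr rfl fun b _ => by
                congr 1; funext ω; rw [hsymm ω i j]; ring,
            Ev2 hp hmeas hsymm hdiag h01 hbern hindep (Ne.symm hij),
            sum_comm2 (fun a b => ∫ ω, A ω i b * (A ω b a * A ω a j)),
            Ev8 hp hmeas hsymm hdiag h01 hbern hindep hij]
          ring
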